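/- arXiv:1512.07522 — 4 statements merged into one kernel-verified Lean document; each statement's English description precedes it below -/
import Mathlib

section
/- Let n ≥ 1 and j, i ∈ V. If 𝒟 has a path of length n (i.e., consisting of n edges) from j to i, then the ji-th entry of A_1 ⊙ A_0^{⊙(n−1)} equals the maximum of the weights d_{ji}(p) over all paths p of length n from j to i; otherwise this entry equals 0. -/
open scoped NNReal ENNReal Classical

namespace MaxLinearDAG

variable {d : ℕ}

/-- `p` is a directed path (with at least one edge) from `j` to `i` in the edge relation `E`. -/
def PathFrom (E : Fin d → Fin d → Prop) (j i : Fin d) (p : List (Fin d)) : Prop :=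
  2 ≤ p.length ∧ p.head? = some j ∧ p.getLast? = some i ∧ List.Chain' E p

/-- The directed graph given by `E` is acyclic: no directed path from a node to itself. -/
def Acyclic (E : Fin d → Fin d → Prop) : Prop :=
  ∀ i, ¬ ∃ p, PathFrom E i i p

/-- `j` is an ancestor of `i`: there is a path from `j` to `i`. -/
def anc (E : Fin d → Fin d → Prop) (j i : Fin d) : Prop :=
  ∃ p, PathFrom E j i p

/-- The weight of a path `p` starting at `j`: `c j j` times the product of the
edge weights along `p`. -/
noncomputable def pathWeight (c : Fin d → Fin d → ℝ≥0) (j : Fin d) (p : List (Fin d)) : ℝ≥0 :=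
  c j j * ((p.zip p.tail).map fun q => c q.1 q.2).prod

/-- `b` is the max-linear coefficient matrix of the recursive ML model on `(E, c)`:
for `j ∈ an(i)`, `b j i` is the (attained) maximum of the path weights over all paths
from `j` to `i`; `b i i = c i i`; and `b j i = 0` for `j ∉ An(i)`. -/
def IsMLMatrix (E : Fin d → Fin d → Prop) (c b : Fin d → Fin d → ℝ≥0) : Prop :=
  (∀ i, b i i = c i i) ∧
  (∀ j i, j ≠ i → ¬ anc E j i → b j i = 0) ∧
  (∀ j i p, PathFrom E j i p → pathWeight c j p ≤ b j i) ∧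
  (∀ j i, anc E j i → ∃ p, PathFrom E j i p ∧ pathWeight c j p = b j i)

/-- `x` is the vector of recursive max-linear values on `(E, c)` for noise `z`:
`x i = max (max_{k ∈ pa(i)} c k i * x k) (c i i * z i)`, empty max being `0`. -/
def IsRecML (E : Fin d → Fin d → Prop) (c : Fin d → Fin d → ℝ≥0) (z x : Fin d → ℝ≥0) : Prop :=
  ∀ i, x i = (Finset.univ.sup fun k => if E k i then c k i * x k else 0) ⊔ c i i * z i

/-- Max-times matrix product `F ⊙ G`. -/
noncomputable def mprod (F G : Fin d → Fin d → ℝ≥0) : Fin d → Fin d → ℝ≥0 :=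
  fun i j => Finset.univ.sup fun k => F i k * G k j

/-- Max-times matrix power, `mpow A 0` being the identity matrix. -/
noncomputable def mpow (A : Fin d → Fin d → ℝ≥0) : ℕ → Fin d → Fin d → ℝ≥0
  | 0 => fun i j => if i = j then 1 else 0
  | n + 1 => mprod (mpow A n) A

/-- `p` is a max-weighted path from `j` to `i`. -/
def MaxWeighted (E : Fin d → Fin d → Prop) (c b : Fin d → Fin d → ℝ≥0)
    (j i : Fin d) (p : List (Fin d)) : Prop :=
  PathFrom E j i p ∧ pathWeight c j p = b j i

/-- The lowest max-weighted ancestors of `i` in `U`: nodes `j ∈ An(i) ∩ U` such that no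
max-weighted path from `j` to `i` passes through a node of `U \ {j}`. -/
def AnLow (E : Fin d → Fin d → Prop) (c b : Fin d → Fin d → ℝ≥0)
    (U : Set (Fin d)) (i : Fin d) : Set (Fin d) :=
  {j | (anc E j i ∨ j = i) ∧ j ∈ U ∧
    ∀ p, MaxWeighted E c b j i p → ¬ ∃ u ∈ U \ {j}, u ∈ p}

/-- The highest max-weighted descendants of `i` in `U`: nodes `l ∈ De(i) ∩ U` such that no
max-weighted path from `i` to `l` passes through a node of `U \ {l}`. -/
def DeHigh (E : Fin d → Fin d → Prop) (c b : Fin d → Fin d → ℝ≥0)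
    (U : Set (Fin d)) (i : Fin d) : Set (Fin d) :=
  {l | (anc E i l ∨ l = i) ∧ l ∈ U ∧
    ∀ p, MaxWeighted E c b i l p → ¬ ∃ u ∈ U \ {l}, u ∈ p}

-- auxiliary
noncomputable def prodE (c : Fin d → Fin d → ℝ≥0) (p : List (Fin d)) : ℝ≥0 :=
  ((p.zip p.tail).map fun q => c q.1 q.2).prod

lemma pathWeight_eq (c : Fin d → Fin d → ℝ≥0) (j : Fin d) (p : List (Fin d)) :
    pathWeight c j p = c j j * prodE c p := rfl

lemma prodE_singleton (c : Fin d → Fin d → ℝ≥0) (a : Fin d) : prodE c [a] = 1 := by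
  simp [prodE]

lemma prodE_cons_cons (c : Fin d → Fin d → ℝ≥0) (a b : Fin d) (r : List (Fin d)) :
    prodE c (a :: b :: r) = c a b * prodE c (b :: r) := by
  simp [prodE]

private lemma supmul (a b c : ℝ≥0) : (a ⊔ b) * c = a * c ⊔ b * c := by
  rcases le_total a b with h | h
  · rw [sup_of_le_right h, sup_of_le_right (mul_le_mul_left h c)]
  · rw [sup_of_le_left h, sup_of_le_left (mul_le_mul_left h c)]

private lemma mulsup (a b c : ℝ≥0) : c * (a ⊔ b) = c * a ⊔ c * b := by
  rw [mul_comm, supmul, mul_comm a c, mul_comm b c]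

lemma finsup_mul (f : Fin d → ℝ≥0) (a : ℝ≥0) :
    (Finset.univ.sup f) * a = Finset.univ.sup fun x => f x * a :=
  Finset.comp_sup_eq_sup_comp (· * a) (fun x y => supmul x y a) (zero_mul a)

lemma mul_finsup (f : Fin d → ℝ≥0) (a : ℝ≥0) :
    a * Finset.univ.sup f = Finset.univ.sup fun x => a * f x :=
  Finset.comp_sup_eq_sup_comp (a * ·) (fun x y => mulsup x y a) (mul_zero a)

lemma mprod_assoc (F G H : Fin d → Fin d → ℝ≥0) :
    mprod (mprod F G) H = mprod F (mprod G H) := by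
  funext i j
  simp only [mprod, finsup_mul, mul_finsup]
  rw [Finset.sup_comm]
  simp [mul_assoc]

lemma mprod_one_left (A : Fin d → Fin d → ℝ≥0) : mprod (mpow A 0) A = A := by
  funext i j
  simp only [mprod, mpow]
  apply le_antisymm
  · refine Finset.sup_le fun k _ => ?_
    split_ifs with h
    · subst h; simp
    · simp
  · simpa using Finset.le_sup (f := fun k => (if i = k then (1 : ℝ≥0) else 0) * A k j)
      (Finset.mem_univ i)

lemma mprod_one_right (A : Fin d → Fin d → ℝ≥0) : mprod A (mpow A 0) = A := by
  funext i j
  simp only [mprod, mpow]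
  apply le_antisymm
  · refine Finset.sup_le fun k _ => ?_
    split_ifs with h
    · subst h; simp
    · simp
  · simpa using Finset.le_sup (f := fun k => A i k * (if k = j then (1 : ℝ≥0) else 0))
      (Finset.mem_univ j)

lemma mpow_succ (A : Fin d → Fin d → ℝ≥0) (m : ℕ) :
    mpow A (m + 1) = mprod A (mpow A m) := by
  induction m with
  | zero => show mprod (mpow A 0) A = mprod A (mpow A 0); rw [mprod_one_left, mprod_one_right]
  | succ m ih =>
    show mprod (mprod (mpow A m) A) A = mprod A (mpow A (m + 1))
    rw [show mprod (mpow A m) A = mprod A (mpow A m) from ih, mprod_assoc,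
      show mprod (mpow A m) A = mprod A (mpow A m) from ih, ih]


lemma prodE_pos {E : Fin d → Fin d → Prop} {c : Fin d → Fin d → ℝ≥0}
    (hce : ∀ k i, E k i → 0 < c k i) :
    ∀ p : List (Fin d), List.Chain' E p → 0 < prodE c p
  | [], _ => by simp [prodE]
  | [a], _ => by simp [prodE]
  | a :: b :: r, h =>
    mul_pos (hce a b (List.isChain_cons_cons.mp h).1)
      (prodE_pos hce (b :: r) (List.isChain_cons_cons.mp h).2) |>.trans_eq
      (prodE_cons_cons c a b r).symm

lemma le_mpow {E : Fin d → Fin d → Prop} {c : Fin d → Fin d → ℝ≥0}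
    (A0 : Fin d → Fin d → ℝ≥0) (hA0 : ∀ a a', A0 a a' = if E a a' then c a a' else 0) :
    ∀ (m : ℕ) (p : List (Fin d)) (k i : Fin d), List.Chain' E p → p.head? = some k →
      p.getLast? = some i → p.length = m + 1 → prodE c p ≤ mpow A0 m k i := by
  intro m
  induction m with
  | zero =>
    intro p k i hc hh hl hlen
    cases p with
    | nil => simp at hh
    | cons a t =>
      cases t with
      | cons b r => simp only [List.length_cons, List.length_nil] at hlen; omega
      | nil =>
        have h1 : a = k := by simpa using hh
        have h2 : a = i := by simpa using hl
        have h3 : k = i := h1 ▸ h2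
        simp [prodE, mpow, h3]
  | succ m ih =>
    intro p k i hc hh hl hlen
    cases p with
    | nil => simp at hh
    | cons a t =>
      obtain rfl : a = k := by simpa using hh
      cases t with
      | nil => simp only [List.length_cons, List.length_nil] at hlen; omega
      | cons b r =>
        have hE : E a b := (List.isChain_cons_cons.mp hc).1
        have hc2 : List.Chain' E (b :: r) := (List.isChain_cons_cons.mp hc).2
        have hl2 : (b :: r).getLast? = some i := by rw [← hl]; rfl
        have h1 : prodE c (b :: r) ≤ mpow A0 m b i :=
          ih (b :: r) b i hc2 rfl hl2 (by simpa using hlen)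
        rw [mpow_succ]
        calc prodE c (a :: b :: r) = c a b * prodE c (b :: r) := prodE_cons_cons c a b r
          _ ≤ A0 a b * mpow A0 m b i := by
              rw [hA0, if_pos hE]; exact mul_le_mul_right h1 _
          _ ≤ mprod A0 (mpow A0 m) a i :=
              Finset.le_sup (f := fun l => A0 a l * mpow A0 m l i) (Finset.mem_univ b)

lemma mpow_exists {E : Fin d → Fin d → Prop} {c : Fin d → Fin d → ℝ≥0}
    (A0 : Fin d → Fin d → ℝ≥0) (hA0 : ∀ a a', A0 a a' = if E a a' then c a a' else 0) :
    ∀ (m : ℕ) (k i : Fin d), mpow A0 m k i ≠ 0 →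
      ∃ p, List.Chain' E p ∧ p.head? = some k ∧ p.getLast? = some i ∧
        p.length = m + 1 ∧ prodE c p = mpow A0 m k i := by
  intro m
  induction m with
  | zero =>
    intro k i h
    simp only [mpow] at h ⊢
    split_ifs at h with hk
    · subst hk
      exact ⟨[k], List.isChain_singleton k, rfl, rfl, rfl, by simp [prodE]⟩
    · exact absurd rfl h
  | succ m ih =>
    intro k i h
    rw [mpow_succ] at h ⊢
    obtain ⟨l, -, hsup⟩ := Finset.exists_mem_eq_sup Finset.univ ⟨k, Finset.mem_univ k⟩
      (fun l => A0 k l * mpow A0 m l i)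
    have hsup' : mprod A0 (mpow A0 m) k i = A0 k l * mpow A0 m l i := hsup
    rw [hsup'] at h ⊢
    have hEkl : E k l := by
      by_contra hne
      rw [hA0, if_neg hne, zero_mul] at h
      exact h rfl
    have h2 : mpow A0 m l i ≠ 0 := by
      intro h0; rw [h0, mul_zero] at h; exact h rfl
    obtain ⟨q, hqc, hqh, hql, hqlen, hqw⟩ := ih l i h2
    cases q with
    | nil => simp at hqh
    | cons a q' =>
      obtain rfl : a = l := by simpa using hqh
      have hlast : (k :: a :: q').getLast? = some i := by rw [← hql]; rfl
      refine ⟨k :: a :: q', List.isChain_cons_cons.mpr ⟨hEkl, hqc⟩, rfl, hlast,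
        by simp only [List.length_cons] at hqlen ⊢; omega, ?_⟩
      rw [prodE_cons_cons, hqw, hA0, if_pos hEkl]

lemma key {E : Fin d → Fin d → Prop} {c : Fin d → Fin d → ℝ≥0}
    (hcd : ∀ i, 0 < c i i) (hce : ∀ k i, E k i → 0 < c k i)
    (A0 A1 : Fin d → Fin d → ℝ≥0)
    (hA0 : ∀ a a', A0 a a' = if E a a' then c a a' else 0)
    (hA1 : ∀ a a', A1 a a' = if E a a' then c a a * c a a' else 0)
    (m : ℕ) (j i : Fin d) :
    ((∃ p, PathFrom E j i p ∧ p.length = m + 2) →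
      (∀ p, PathFrom E j i p → p.length = m + 2 →
          pathWeight c j p ≤ mprod A1 (mpow A0 m) j i) ∧
        ∃ p, PathFrom E j i p ∧ p.length = m + 2 ∧
          pathWeight c j p = mprod A1 (mpow A0 m) j i) ∧
    ((¬ ∃ p, PathFrom E j i p ∧ p.length = m + 2) →
      mprod A1 (mpow A0 m) j i = 0) := by
  have hub : ∀ p, PathFrom E j i p → p.length = m + 2 →
      pathWeight c j p ≤ mprod A1 (mpow A0 m) j i := by
    intro p hp hlen
    obtain ⟨-, hh, hl, hc⟩ := hp
    cases p with
    | nil => simp at hh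
    | cons a t =>
      obtain rfl : a = j := by simpa using hh
      cases t with
      | nil => simp only [List.length_cons, List.length_nil] at hlen; omega
      | cons b r =>
        have hE : E a b := (List.isChain_cons_cons.mp hc).1
        have hc2 : List.Chain' E (b :: r) := (List.isChain_cons_cons.mp hc).2
        have hl2 : (b :: r).getLast? = some i := by rw [← hl]; rfl
        have h1 : prodE c (b :: r) ≤ mpow A0 m b i :=
          le_mpow A0 hA0 m (b :: r) b i hc2 rfl hl2 (by simpa using hlen)
        calc pathWeight c a (a :: b :: r) = (c a a * c a b) * prodE c (b :: r) := by
              rw [pathWeight_eq, prodE_cons_cons, mul_assoc]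
          _ ≤ A1 a b * mpow A0 m b i := by
              rw [hA1, if_pos hE]; exact mul_le_mul_right h1 _
          _ ≤ mprod A1 (mpow A0 m) a i :=
              Finset.le_sup (f := fun l => A1 a l * mpow A0 m l i) (Finset.mem_univ b)
  have hex : mprod A1 (mpow A0 m) j i ≠ 0 →
      ∃ p, PathFrom E j i p ∧ p.length = m + 2 ∧
        pathWeight c j p = mprod A1 (mpow A0 m) j i := by
    intro hne
    obtain ⟨k, -, hsup⟩ := Finset.exists_mem_eq_sup Finset.univ ⟨j, Finset.mem_univ j⟩
      (fun k => A1 j k * mpow A0 m k i)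
    have hsup' : mprod A1 (mpow A0 m) j i = A1 j k * mpow A0 m k i := hsup
    rw [hsup'] at hne ⊢
    have hEjk : E j k := by
      by_contra hE
      rw [hA1, if_neg hE, zero_mul] at hne
      exact hne rfl
    have h2 : mpow A0 m k i ≠ 0 := by
      intro h0; rw [h0, mul_zero] at hne; exact hne rfl
    obtain ⟨q, hqc, hqh, hql, hqlen, hqw⟩ := mpow_exists A0 hA0 m k i h2
    cases q with
    | nil => simp at hqh
    | cons a q' =>
      obtain rfl : a = k := by simpa using hqh
      have hlast : (j :: a :: q').getLast? = some i := by rw [← hql]; rfl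
      refine ⟨j :: a :: q', ⟨by simp, rfl, hlast, List.isChain_cons_cons.mpr ⟨hEjk, hqc⟩⟩,
        by simp only [List.length_cons] at hqlen ⊢; omega, ?_⟩
      rw [pathWeight_eq, prodE_cons_cons, hqw, hA1, if_pos hEjk, mul_assoc]
  constructor
  · rintro ⟨p0, hp0, hlen0⟩
    refine ⟨hub, ?_⟩
    have hle := hub p0 hp0 hlen0
    have hpos : 0 < pathWeight c j p0 := by
      rw [pathWeight_eq]
      exact mul_pos (hcd j) (prodE_pos hce p0 hp0.2.2.2)
    exact hex fun h0 => absurd (le_antisymm (h0 ▸ hle) zero_le) hpos.ne'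
  · intro hno
    by_contra hne0
    obtain ⟨p, hp, hl, -⟩ := hex hne0
    exact hno ⟨p, hp, hl⟩


/-- Let `n ≥ 1`. If `𝒟` has a path of length `n` (i.e. with `n` edges, hence
`n + 1` vertices) from `j` to `i`, then the `ji`-th entry of `A1 ⊙ A0^{⊙(n-1)}` equals the
(attained) maximum of the weights over all paths of length `n` from `j` to `i`; otherwise
this entry equals `0`. -/
theorem stmt2 {d : ℕ} (hd : 1 ≤ d) (E : Fin d → Fin d → Prop) (hE : Acyclic E)
    (c : Fin d → Fin d → ℝ≥0) (hcd : ∀ i, 0 < c i i) (hce : ∀ k i, E k i → 0 < c k i)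
    (n : ℕ) (hn : 1 ≤ n) (j i : Fin d) :
    let A0 : Fin d → Fin d → ℝ≥0 := fun a a' => if E a a' then c a a' else 0
    let A1 : Fin d → Fin d → ℝ≥0 := fun a a' => if E a a' then c a a * c a a' else 0
    ((∃ p, PathFrom E j i p ∧ p.length = n + 1) →
      (∀ p, PathFrom E j i p → p.length = n + 1 →
          pathWeight c j p ≤ mprod A1 (mpow A0 (n - 1)) j i) ∧
        ∃ p, PathFrom E j i p ∧ p.length = n + 1 ∧
          pathWeight c j p = mprod A1 (mpow A0 (n - 1)) j i) ∧
    ((¬ ∃ p, PathFrom E j i p ∧ p.length = n + 1) →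
      mprod A1 (mpow A0 (n - 1)) j i = 0) := by
  intro A0 A1
  obtain ⟨m, rfl⟩ : ∃ m, n = m + 1 := ⟨n - 1, (Nat.succ_pred_eq_of_pos hn).symm⟩
  simp only [Nat.add_sub_cancel]
  exact key hcd hce A0 A1 (fun _ _ => rfl) (fun _ _ => rfl) m j i
end MaxLinearDAG
end

section
/- For all i ∈ V, k ∈ An(i), and j ∈ An(k), one has b_{ji} ≥ b_{jk} b_{ki} / b_{kk} > 0. Moreover, the inequality b_{ji} ≥ b_{jk} b_{ki} / b_{kk} holds for all i, j, k ∈ V. -/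
open scoped NNReal ENNReal Classical

namespace MaxLinearDAG

variable {d : ℕ}

lemma chain'_pairs {E : Fin d → Fin d → Prop} :
    ∀ {p : List (Fin d)}, List.Chain' E p → ∀ q ∈ p.zip p.tail, E q.1 q.2 := by
  intro p
  induction p with
  | nil => intro _ q hq; simp at hq
  | cons a t ih =>
    intro h q hq
    cases t with
    | nil => simp at hq
    | cons b t' =>
      replace h := List.isChain_cons_cons.mp h
      simp only [List.tail_cons, List.zip_cons_cons, List.mem_cons] at hq
      rcases hq with rfl | hq
      · exact h.1
      · exact ih h.2 q hq

lemma pairs_append (f : Fin d × Fin d → ℝ≥0) :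
    ∀ (p : List (Fin d)) (k : Fin d) (t : List (Fin d)), p.getLast? = some k →
      (((p ++ t).zip (p ++ t).tail).map f).prod =
        ((p.zip p.tail).map f).prod * (((k :: t).zip t).map f).prod := by
  intro p
  induction p with
  | nil => intro k t h; simp at h
  | cons a p' ih =>
    intro k t h
    cases p' with
    | nil =>
      simp only [List.getLast?_singleton, Option.some.injEq] at h
      subst h
      simp
    | cons b p'' =>
      have hlast : (b :: p'').getLast? = some k := by
        rw [List.getLast?_cons_cons] at h; exact h
      simp only [List.cons_append, List.tail_cons, List.zip_cons_cons, List.map_cons,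
        List.prod_cons]
      have := ih k t hlast
      simp only [List.cons_append, List.tail_cons] at this
      rw [this]
      ring

lemma pathWeight_pos {E : Fin d → Fin d → Prop} {c : Fin d → Fin d → ℝ≥0}
    (hcd : ∀ i, 0 < c i i) (hce : ∀ k i, E k i → 0 < c k i)
    {j i : Fin d} {p : List (Fin d)} (hp : PathFrom E j i p) :
    0 < pathWeight c j p := by
  unfold pathWeight
  apply mul_pos (hcd j)
  rw [pos_iff_ne_zero]
  intro h0
  have h0' : (0 : ℝ≥0) ∈ (p.zip p.tail).map fun q => c q.1 q.2 :=
    List.prod_eq_zero_iff.mp h0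
  rcases List.mem_map.mp h0' with ⟨q, hq, hq0⟩
  exact (hce q.1 q.2 (chain'_pairs hp.2.2.2 q hq)).ne' hq0

lemma pathFrom_append {E : Fin d → Fin d → Prop} (c : Fin d → Fin d → ℝ≥0)
    {j k i : Fin d} {p q : List (Fin d)}
    (hp : PathFrom E j k p) (hq : PathFrom E k i q) :
    PathFrom E j i (p ++ q.tail) ∧
      pathWeight c j (p ++ q.tail) * c k k = pathWeight c j p * pathWeight c k q := by
  obtain ⟨hpl, hph, hplast, hpc⟩ := hp
  obtain ⟨hql, hqh, hqlast, hqc⟩ := hq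
  obtain ⟨t, rfl⟩ : ∃ t, q = k :: t := by
    cases q with
    | nil => simp at hqh
    | cons a t => simp only [List.head?_cons, Option.some.injEq] at hqh; exact ⟨t, by rw [hqh]⟩
  have ht : t ≠ [] := by
    intro h; subst h; simp at hql
  simp only [List.tail_cons]
  have hqlast' : t.getLast? = some i := by
    obtain ⟨y, t', rfl⟩ : ∃ y t', t = y :: t' := by
      cases t with
      | nil => exact absurd rfl ht
      | cons y t' => exact ⟨y, t', rfl⟩
    rwa [List.getLast?_cons_cons] at hqlast
  have hqc' : (∀ y ∈ t.head?, E k y) ∧ List.Chain' E t := List.isChain_cons.mp hqc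
  constructor
  · refine ⟨?_, ?_, ?_, ?_⟩
    · have : 1 ≤ t.length := List.length_pos_iff.mpr ht
      rw [List.length_append]; omega
    · cases p with
      | nil => simp at hpl
      | cons a p' => simpa using hph
    · rw [List.getLast?_append_of_ne_nil p ht]; exact hqlast'
    · refine List.IsChain.append hpc hqc'.2 ?_
      intro x hx y hy
      rw [hplast] at hx
      simp only [Option.mem_def, Option.some.injEq] at hx
      subst hx
      exact hqc'.1 y hy
  · unfold pathWeight
    rw [pairs_append _ p k t hplast]
    simp only [List.tail_cons]
    ring

lemma b_pos {E : Fin d → Fin d → Prop} {c b : Fin d → Fin d → ℝ≥0}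
    (hcd : ∀ i, 0 < c i i) (hce : ∀ k i, E k i → 0 < c k i)
    (hb : IsMLMatrix E c b) {j k : Fin d} (h : anc E j k ∨ j = k) : 0 < b j k := by
  rcases h with h | rfl
  · obtain ⟨p, hp, hw⟩ := hb.2.2.2 j k h
    rw [← hw]
    exact pathWeight_pos hcd hce hp
  · rw [hb.1]; exact hcd j

/-- For all `i ∈ V`, `k ∈ An(i)` and `j ∈ An(k)` one has
`b j i ≥ b j k * b k i / b k k > 0`; moreover `b j i ≥ b j k * b k i / b k k` holds for all
`i, j, k ∈ V`. -/
theorem stmt4 {d : ℕ} (hd : 1 ≤ d) (E : Fin d → Fin d → Prop) (hE : Acyclic E)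
    (c : Fin d → Fin d → ℝ≥0) (hcd : ∀ i, 0 < c i i) (hce : ∀ k i, E k i → 0 < c k i)
    (b : Fin d → Fin d → ℝ≥0) (hb : IsMLMatrix E c b) :
    (∀ i k j, (anc E k i ∨ k = i) → (anc E j k ∨ j = k) →
      0 < b j k * b k i / b k k ∧ b j k * b k i / b k k ≤ b j i) ∧
    (∀ i j k, b j k * b k i / b k k ≤ b j i) := by
  have key : ∀ i k j, (anc E k i ∨ k = i) → (anc E j k ∨ j = k) →
      b j k * b k i ≤ b j i * b k k := by
    intro i k j hki hjk
    rcases hjk with hjk | rfl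
    · rcases hki with hki | rfl
      · obtain ⟨p, hp, hwp⟩ := hb.2.2.2 j k hjk
        obtain ⟨q, hq, hwq⟩ := hb.2.2.2 k i hki
        obtain ⟨hr, hw⟩ := pathFrom_append c hp hq
        calc b j k * b k i = pathWeight c j (p ++ q.tail) * c k k := by
              rw [← hwp, ← hwq, hw]
          _ ≤ b j i * b k k := by
              rw [hb.1 k]
              exact mul_le_mul_left (hb.2.2.1 j i _ hr) _
      · rw [mul_comm]
    · rw [mul_comm]
  have hbkk : ∀ k : Fin d, 0 < b k k := fun k => by rw [hb.1]; exact hcd k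
  constructor
  · intro i k j hki hjk
    have hki' := b_pos hcd hce hb hki
    have hjk' := b_pos hcd hce hb hjk
    refine ⟨div_pos (mul_pos hjk' hki') (hbkk k), ?_⟩
    rw [div_le_iff₀ (hbkk k)]
    exact key i k j hki hjk
  · intro i j k
    by_cases hki : anc E k i ∨ k = i
    · by_cases hjk : anc E j k ∨ j = k
      · rw [div_le_iff₀ (hbkk k)]
        exact key i k j hki hjk
      · push_neg at hjk
        rw [hb.2.1 j k hjk.2 hjk.1]
        simp
    · push_neg at hki
      rw [hb.2.1 k i hki.2 hki.1]
      simp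
end MaxLinearDAG
end

section
/- Let i ∈ V and let 𝒟_i = (An(i), E_i) be a subgraph of 𝒟 with node set An(i) and E_i ⊆ E ∩ (An(i)×An(i)) such that the underlying undirected graph of 𝒟_i (the simple graph on An(i) in which u and v are adjacent iff u ≠ v and (u,v) ∈ E_i or (v,u) ∈ E_i) has no cycles, and such that for every j ∈ an(i) the graph 𝒟_i contains a path from j to i that is max-weighted in 𝒟. Fix z ∈ [0,∞)^d, let x be the recursive max-linear values on 𝒟, and let y be the recursive max-linear values on 𝒟_i with the same weights (c restricted to edges of E_i and the same diagonal weights c_{jj}) and the same z. Then for every j ∈ An(i) whose set of ancestors in 𝒟_i equals its set of ancestors in 𝒟, one has x_j = y_j. -/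
open scoped NNReal ENNReal Classical

namespace MaxLinearDAG

variable {d : ℕ}

/-! ### Auxiliary infrastructure -/

/-- Inductive weighted-path predicate: `PW E c j i p w` says `p` is a directed path from
`j` to `i` in `E` whose product of edge weights is `w`. -/
inductive PW (E : Fin d → Fin d → Prop) (c : Fin d → Fin d → ℝ≥0) :
    Fin d → Fin d → List (Fin d) → ℝ≥0 → Prop
  | single {j i : Fin d} (h : E j i) : PW E c j i [j, i] (c j i)
  | cons {j k i : Fin d} {p : List (Fin d)} {w : ℝ≥0} (h : E j k) (hp : PW E c k i p w) :
      PW E c j i (j :: p) (c j k * w)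

/-- The product of edge weights along a list. -/
noncomputable def eprod (c : Fin d → Fin d → ℝ≥0) (p : List (Fin d)) : ℝ≥0 :=
  ((p.zip p.tail).map fun q => c q.1 q.2).prod

lemma eprod_pair (c : Fin d → Fin d → ℝ≥0) (a b : Fin d) : eprod c [a, b] = c a b := by
  simp [eprod]

lemma eprod_cons_cons (c : Fin d → Fin d → ℝ≥0) (a b : Fin d) (l : List (Fin d)) :
    eprod c (a :: b :: l) = c a b * eprod c (b :: l) := by
  simp [eprod]

namespace PW

variable {E E' : Fin d → Fin d → Prop} {c : Fin d → Fin d → ℝ≥0}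
variable {j k i : Fin d} {p q : List (Fin d)} {w w' : ℝ≥0}

lemma head_eq (h : PW E c j i p w) : ∃ t, p = j :: t := by
  cases h with
  | single h => exact ⟨_, rfl⟩
  | cons h hp => exact ⟨_, rfl⟩

lemma mono (hEE : ∀ u v, E' u v → E u v) (h : PW E' c j i p w) : PW E c j i p w := by
  induction h with
  | single h => exact .single (hEE _ _ h)
  | cons h hp ih => exact .cons (hEE _ _ h) ih

lemma trans (h1 : PW E c j k p w) (h2 : PW E c k i q w') :
    PW E c j i (p ++ q.tail) (w * w') := by
  induction h1 with
  | @single a bb h =>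
      obtain ⟨t, rfl⟩ := h2.head_eq
      exact .cons h h2
  | @cons a m bb p₀ w₀ h hp ih =>
      simpa [mul_assoc] using PW.cons h (ih h2)

lemma pos (hce : ∀ u v, E u v → 0 < c u v) (h : PW E c j i p w) : 0 < w := by
  induction h with
  | single h => exact hce _ _ h
  | cons h hp ih => exact mul_pos (hce _ _ h) ih

lemma eprod_eq (h : PW E c j i p w) : eprod c p = w := by
  induction h with
  | single h => exact eprod_pair _ _ _
  | @cons a m bb p₀ w₀ h hp ih =>
      obtain ⟨t, rfl⟩ := hp.head_eq
      rw [eprod_cons_cons, ih]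

lemma pathFrom (h : PW E c j i p w) : PathFrom E j i p := by
  induction h with
  | single h => exact ⟨by simp, by simp, by simp, by simp [List.Chain', h]⟩
  | @cons a m bb p₀ w₀ h hp ih =>
      obtain ⟨t, rfl⟩ := hp.head_eq
      obtain ⟨h1, h2, h3, h4⟩ := ih
      exact ⟨by simpa using Nat.le_succ_of_le h1, by simp,
        by simpa using h3, by simp only [List.Chain'] at h4 ⊢; simp [List.isChain_cons_cons, h, h4]⟩

lemma pathWeight_eq (h : PW E c j i p w) : pathWeight c j p = c j j * w := by
  have he : eprod c p = w := h.eprod_eq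
  rw [pathWeight, ← he, eprod]

lemma anc (h : PW E c j i p w) : MaxLinearDAG.anc E j i := ⟨p, h.pathFrom⟩

end PW

lemma pathFrom_toPW {E : Fin d → Fin d → Prop} (c : Fin d → Fin d → ℝ≥0)
    {j i : Fin d} {p : List (Fin d)} (h : PathFrom E j i p) : PW E c j i p (eprod c p) := by
  induction p generalizing j with
  | nil => simp [PathFrom] at h
  | cons a t ih =>
    obtain ⟨hl, hh, hla, hch⟩ := h
    have ha : a = j := by simpa using hh
    subst ha
    cases t with
    | nil => simp at hl
    | cons m t' =>
      have hE : E a m ∧ List.Chain' E (m :: t') := by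
        simpa [List.Chain', List.isChain_cons_cons] using hch
      cases t' with
      | nil =>
        have hm : m = i := by simpa using hla
        subst hm
        rw [eprod_pair]
        exact .single hE.1
      | cons bb t'' =>
        have hp : PathFrom E m i (m :: bb :: t'') :=
          ⟨by simp, rfl, by simpa using hla, hE.2⟩
        have := ih hp
        rw [eprod_cons_cons]
        exact .cons hE.1 this

lemma anc_trans {E : Fin d → Fin d → Prop} {j k i : Fin d}
    (h1 : anc E j k) (h2 : anc E k i) : anc E j i := by
  obtain ⟨p, hp⟩ := h1; obtain ⟨q, hq⟩ := h2
  exact ((pathFrom_toPW (fun _ _ => 1) hp).trans (pathFrom_toPW (fun _ _ => 1) hq)).anc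

lemma PW.mem {E : Fin d → Fin d → Prop} {c : Fin d → Fin d → ℝ≥0}
    {k i : Fin d} {p : List (Fin d)} {w : ℝ≥0} (h : PW E c k i p w) :
    ∀ u ∈ p, u = k ∨ MaxLinearDAG.anc E k u := by
  induction h with
  | @single a bb h =>
      intro u hu
      rcases List.mem_pair.mp hu with rfl | rfl
      · exact Or.inl rfl
      · exact Or.inr (PW.single (c := c) h).anc
  | @cons a m bb p₀ w₀ h hp ih =>
      intro u hu
      rcases List.mem_cons.mp hu with rfl | hu
      · exact Or.inl rfl
      · rcases ih u hu with rfl | hanc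
        · exact Or.inr (PW.single (c := c) h).anc
        · exact Or.inr (anc_trans (PW.single (c := c) h).anc hanc)

lemma PW.nodup {E : Fin d → Fin d → Prop} {c : Fin d → Fin d → ℝ≥0} (hE : Acyclic E)
    {j i : Fin d} {p : List (Fin d)} {w : ℝ≥0} (h : PW E c j i p w) : p.Nodup := by
  induction h with
  | @single a bb h =>
      have hne : a ≠ bb := by
        rintro rfl
        exact hE a (PW.single (c := c) h).anc
      simp [hne]
  | @cons a m bb p₀ w₀ h hp ih =>
      refine List.nodup_cons.mpr ⟨?_, ih⟩
      intro hmem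
      rcases hp.mem _ hmem with rfl | hanc
      · exact hE a (PW.single (c := c) h).anc
      · exact hE a (anc_trans (PW.single (c := c) h).anc hanc)

lemma chain'_adj (E' : Fin d → Fin d → Prop) :
    ∀ p : List (Fin d), List.Chain' E' p → p.Nodup →
      List.Chain' (SimpleGraph.fromRel E').Adj p := by
  intro p
  induction p with
  | nil => simp [List.Chain']
  | cons a t ih =>
    cases t with
    | nil => simp [List.Chain']
    | cons bb t' =>
      intro hch hnd
      simp only [List.Chain', List.isChain_cons_cons] at hch ⊢
      have hnd' := List.nodup_cons.mp hnd
      refine ⟨(SimpleGraph.fromRel_adj E' a bb).mpr ⟨?_, Or.inl hch.1⟩, ih hch.2 hnd'.2⟩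
      rintro rfl
      exact hnd'.1 List.mem_cons_self

lemma walk_of_chain {G : SimpleGraph (Fin d)} :
    ∀ (p : List (Fin d)) (a bb : Fin d), p.head? = some a → p.getLast? = some bb →
      List.Chain' G.Adj p → ∃ w : G.Walk a bb, w.support = p := by
  intro p
  induction p with
  | nil => intro a bb h; simp at h
  | cons x t ih =>
    intro a bb hh hl hch
    have hx : x = a := by simpa using hh
    subst hx
    cases t with
    | nil =>
      have hb : x = bb := by simpa using hl
      subst hb
      exact ⟨SimpleGraph.Walk.nil, by simp⟩
    | cons y t' =>
      simp only [List.Chain', List.isChain_cons_cons] at hch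
      obtain ⟨w, hw⟩ := ih y bb rfl (by simpa using hl) hch.2
      exact ⟨SimpleGraph.Walk.cons hch.1 w, by simp [hw]⟩

lemma unique_path {E E' : Fin d → Fin d → Prop} {c : Fin d → Fin d → ℝ≥0}
    (hE : Acyclic E) (hsubE : ∀ u v, E' u v → E u v)
    (htree : (SimpleGraph.fromRel E').IsAcyclic)
    {k i : Fin d} {p s : List (Fin d)} {w w' : ℝ≥0}
    (hp : PW E' c k i p w) (hs : PW E' c k i s w') : p = s := by
  have hndp : p.Nodup := (hp.mono hsubE).nodup hE
  have hnds : s.Nodup := (hs.mono hsubE).nodup hE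
  obtain ⟨wp, hwp⟩ := walk_of_chain p k i hp.pathFrom.2.1 hp.pathFrom.2.2.1
    (chain'_adj E' p hp.pathFrom.2.2.2 hndp)
  obtain ⟨ws, hws⟩ := walk_of_chain s k i hs.pathFrom.2.1 hs.pathFrom.2.2.1
    (chain'_adj E' s hs.pathFrom.2.2.2 hnds)
  have hPp : wp.IsPath := SimpleGraph.Walk.IsPath.mk' (by rw [hwp]; exact hndp)
  have hPs : ws.IsPath := SimpleGraph.Walk.IsPath.mk' (by rw [hws]; exact hnds)
  have huniq := SimpleGraph.isAcyclic_iff_path_unique.mp htree ⟨wp, hPp⟩ ⟨ws, hPs⟩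
  have hww : wp = ws := congrArg Subtype.val huniq
  rw [← hwp, ← hws, hww]

lemma recML_propagate {E : Fin d → Fin d → Prop} {c : Fin d → Fin d → ℝ≥0}
    {z x : Fin d → ℝ≥0} (hx : IsRecML E c z x) {m j : Fin d} {p : List (Fin d)} {w : ℝ≥0}
    (h : PW E c m j p w) : ∀ u : ℝ≥0, u ≤ x m → w * u ≤ x j := by
  induction h with
  | @single a bb h =>
    intro u hu
    have h1 : c a bb * x a ≤ x bb := by
      rw [hx bb]
      refine le_sup_of_le_left ?_
      have := Finset.le_sup (f := fun k => if E k bb then c k bb * x k else 0)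
        (Finset.mem_univ a)
      simpa [h] using this
    exact le_trans (mul_le_mul_right hu _) h1
  | @cons k' m' bb p₀ w₀ h hp ih =>
    intro u hu
    have h1 : c k' m' * u ≤ x m' := by
      rw [hx m']
      refine le_sup_of_le_left ?_
      have h2 : c k' m' * x k' ≤ Finset.univ.sup fun k => if E k m' then c k m' * x k else 0 := by
        simpa [h] using Finset.le_sup (f := fun k => if E k m' then c k m' * x k else 0)
          (Finset.mem_univ k')
      exact le_trans (mul_le_mul_right hu _) h2
    calc (c k' m' * w₀) * u = w₀ * (c k' m' * u) := by ring
    _ ≤ x bb := ih _ h1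

lemma recML_path_le {E : Fin d → Fin d → Prop} {c : Fin d → Fin d → ℝ≥0}
    {z x : Fin d → ℝ≥0} (hx : IsRecML E c z x) {k j : Fin d} {p : List (Fin d)} {w : ℝ≥0}
    (h : PW E c k j p w) : c k k * w * z k ≤ x j := by
  have hk : c k k * z k ≤ x k := by rw [hx k]; exact le_sup_right
  calc c k k * w * z k = w * (c k k * z k) := by ring
  _ ≤ x j := recML_propagate hx h _ hk

lemma step_le {E : Fin d → Fin d → Prop} {c b : Fin d → Fin d → ℝ≥0}
    (hE : Acyclic E) (hb : IsMLMatrix E c b) {k j : Fin d} (hkj : E k j) (u : Fin d) :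
    b u k * c k j ≤ b u j := by
  by_cases hb0 : b u k = 0
  · simp [hb0]
  by_cases huk : u = k
  · subst huk
    rw [hb.1 u]
    have hle := hb.2.2.1 u j [u, j] (PW.single (c := c) hkj).pathFrom
    calc c u u * c u j = pathWeight c u [u, j] := ((PW.single (c := c) hkj).pathWeight_eq).symm
    _ ≤ b u j := hle
  · have hanc : anc E u k := by
      by_contra hn
      exact hb0 (hb.2.1 u k huk hn)
    obtain ⟨p, hp, hpw⟩ := hb.2.2.2 u k hanc
    have hPW := pathFrom_toPW c hp
    have h2 := hPW.trans (PW.single (c := c) hkj)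
    have hle := hb.2.2.1 u j _ h2.pathFrom
    rw [h2.pathWeight_eq] at hle
    rw [hPW.pathWeight_eq] at hpw
    calc b u k * c k j = c u u * (eprod c p * c k j) := by rw [← hpw]; ring
    _ ≤ b u j := hle

lemma recML_le_sup {E E'' : Fin d → Fin d → Prop} (hd : 1 ≤ d) (hE : Acyclic E)
    {c b : Fin d → Fin d → ℝ≥0} (hb : IsMLMatrix E c b)
    (hsub : ∀ u v, E'' u v → E u v) {z y : Fin d → ℝ≥0} (hy : IsRecML E'' c z y) :
    ∀ j, y j ≤ Finset.univ.sup fun k => b k j * z k := by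
  haveI : IsTrans (Fin d) (anc E) := ⟨fun _ _ _ => anc_trans⟩
  haveI : IsIrrefl (Fin d) (anc E) := ⟨fun a => hE a⟩
  refine fun j => WellFounded.induction
    (C := fun j => y j ≤ Finset.univ.sup fun k => b k j * z k)
    (Finite.wellFounded_of_trans_of_irrefl (anc E)) j ?_
  intro j IH
  rw [hy j]
  refine sup_le ?_ ?_
  · refine Finset.sup_le fun k _ => ?_
    by_cases hk : E'' k j
    · rw [if_pos hk]
      have hEkj : E k j := hsub _ _ hk
      have hanc : anc E k j := (PW.single (c := c) hEkj).anc
      have hyk := IH k hanc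
      obtain ⟨u₀, -, hu₀⟩ := Finset.exists_mem_eq_sup Finset.univ
        ⟨⟨0, hd⟩, Finset.mem_univ _⟩ (fun u => b u k * z u)
      have h2 : c k j * y k ≤ c k j * (b u₀ k * z u₀) := by
        rw [← hu₀]; exact mul_le_mul_right hyk _
      have h4 : b u₀ k * c k j ≤ b u₀ j := step_le hE hb hEkj u₀
      calc c k j * y k ≤ c k j * (b u₀ k * z u₀) := h2
      _ = (b u₀ k * c k j) * z u₀ := by ring
      _ ≤ b u₀ j * z u₀ := mul_le_mul_left h4 _
      _ ≤ _ := Finset.le_sup (f := fun u => b u j * z u) (Finset.mem_univ u₀)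
    · rw [if_neg hk]; exact zero_le
  · calc c j j * z j = b j j * z j := by rw [hb.1 j]
    _ ≤ _ := Finset.le_sup (f := fun u => b u j * z u) (Finset.mem_univ j)

lemma sup_le_recML {E : Fin d → Fin d → Prop} {c b : Fin d → Fin d → ℝ≥0}
    (hb : IsMLMatrix E c b) {z x : Fin d → ℝ≥0} (hx : IsRecML E c z x) (j : Fin d) :
    (Finset.univ.sup fun k => b k j * z k) ≤ x j := by
  refine Finset.sup_le fun k _ => ?_
  by_cases hkj : k = j
  · subst hkj
    rw [hb.1 k, hx k]
    exact le_sup_right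
  by_cases hanc : anc E k j
  · obtain ⟨p, hp, hpw⟩ := hb.2.2.2 k j hanc
    have hPW := pathFrom_toPW c hp
    have hle := recML_path_le hx hPW
    rw [hPW.pathWeight_eq] at hpw
    calc b k j * z k = c k k * eprod c p * z k := by rw [hpw]
    _ ≤ x j := hle
  · rw [hb.2.1 k j hkj hanc]; simp

/-- Let `i ∈ V` and `𝒟ᵢ = (An(i), Eᵢ)` be a subgraph of `𝒟` on `An(i)` whose
underlying undirected graph has no cycles and which, for every `j ∈ an(i)`, contains a path
from `j` to `i` that is max-weighted in `𝒟`. If `x` are the recursive max-linear values on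
`𝒟` and `y` those on `𝒟ᵢ` (same weights, same noise `z`), then `x j = y j` for every
`j ∈ An(i)` whose ancestors in `𝒟ᵢ` coincide with its ancestors in `𝒟`. -/
theorem stmt6 {d : ℕ} (hd : 1 ≤ d) (E : Fin d → Fin d → Prop) (hE : Acyclic E)
    (c : Fin d → Fin d → ℝ≥0) (hcd : ∀ i, 0 < c i i) (hce : ∀ k i, E k i → 0 < c k i)
    (b : Fin d → Fin d → ℝ≥0) (hb : IsMLMatrix E c b)
    (i : Fin d) (E' : Fin d → Fin d → Prop)
    (hsub : ∀ u v, E' u v → E u v ∧ (anc E u i ∨ u = i) ∧ (anc E v i ∨ v = i))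
    (htree : (SimpleGraph.fromRel E').IsAcyclic)
    (hmw : ∀ j, anc E j i → ∃ p, PathFrom E' j i p ∧ pathWeight c j p = b j i)
    (z x y : Fin d → ℝ≥0) (hx : IsRecML E c z x) (hy : IsRecML E' c z y) :
    ∀ j, (anc E j i ∨ j = i) → (∀ k, anc E' k j ↔ anc E k j) → x j = y j := by
  have hsubE : ∀ u v, E' u v → E u v := fun u v h => (hsub u v h).1
  have hce' : ∀ u v, E' u v → 0 < c u v := fun u v h => hce u v (hsubE u v h)
  -- key: for k an E'-ancestor of j with a max-weighted E'-path from j to i,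
  -- the bound b k j * z k ≤ y j holds
  have key : ∀ k j : Fin d, anc E' k j →
      (∃ r, PathFrom E' j i r ∧ pathWeight c j r = b j i) → b k j * z k ≤ y j := by
    rintro k j ⟨q, hq⟩ ⟨r, hr, hrw⟩
    have hqPW := pathFrom_toPW c hq
    have hrPW := pathFrom_toPW c hr
    have hkjE : anc E k j := (hqPW.mono hsubE).anc
    have hjiE : anc E j i := (hrPW.mono hsubE).anc
    have hkiE : anc E k i := anc_trans hkjE hjiE
    obtain ⟨p, hpE', hpw⟩ := hmw k hkiE
    have hpPW := pathFrom_toPW c hpE'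
    have hsPW := hqPW.trans hrPW
    have hps : p = q ++ r.tail := unique_path hE hsubE htree hpPW hsPW
    have hw : eprod c p = eprod c q * eprod c r := by
      rw [hps]; exact hsPW.eprod_eq
    rw [hpPW.pathWeight_eq] at hpw
    rw [hrPW.pathWeight_eq] at hrw
    have hqle : c k k * eprod c q ≤ b k j := by
      have h1 := hb.2.2.1 k j q (hqPW.mono hsubE).pathFrom
      rwa [hqPW.pathWeight_eq] at h1
    have hmax : b k j * b j i ≤ c j j * b k i := by
      obtain ⟨qm, hqm, hqmw⟩ := hb.2.2.2 k j hkjE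
      have hqmPW := pathFrom_toPW c hqm
      have hsm := hqmPW.trans (hrPW.mono hsubE)
      have hle := hb.2.2.1 k i _ hsm.pathFrom
      rw [hsm.pathWeight_eq] at hle
      rw [hqmPW.pathWeight_eq] at hqmw
      calc b k j * b j i = (c k k * eprod c qm) * (c j j * eprod c r) := by rw [hqmw, hrw]
      _ = c j j * (c k k * (eprod c qm * eprod c r)) := by ring
      _ ≤ c j j * b k i := mul_le_mul_right hle _
    have hkey : c j j * b k i = (c k k * eprod c q) * b j i := by
      calc c j j * b k i = c j j * (c k k * (eprod c q * eprod c r)) := by rw [← hpw, hw]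
      _ = (c k k * eprod c q) * (c j j * eprod c r) := by ring
      _ = (c k k * eprod c q) * b j i := by rw [hrw]
    have hbji : b j i ≠ 0 := by
      rw [← hrw]
      exact (mul_pos (hcd j) (hrPW.pos hce')).ne'
    have heq : c k k * eprod c q = b k j := by
      have h1 : b k j * b j i ≤ (c k k * eprod c q) * b j i := by
        rw [← hkey]; exact hmax
      have h2 : b k j ≤ c k k * eprod c q :=
        le_of_mul_le_mul_right h1 (pos_iff_ne_zero.mpr hbji)
      exact le_antisymm hqle h2
    have hfin := recML_path_le hy hqPW
    rwa [heq] at hfin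
  intro j hji hanc
  have hxj : x j = Finset.univ.sup fun k => b k j * z k :=
    le_antisymm (recML_le_sup hd hE hb (fun _ _ h => h) hx j) (sup_le_recML hb hx j)
  have hyx : y j ≤ x j := by
    rw [hxj]; exact recML_le_sup hd hE hb hsubE hy j
  have hxy : x j ≤ y j := by
    rw [hxj]
    refine Finset.sup_le fun k _ => ?_
    by_cases hkj : k = j
    · subst hkj
      rw [hb.1 k, hy k]
      exact le_sup_right
    by_cases hancE : anc E k j
    · have hancE' : anc E' k j := (hanc k).mpr hancE
      rcases hji with hji | rfl
      · exact key k j hancE' (hmw j hji)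
      · obtain ⟨p, hp, hpw⟩ := hmw k hancE
        have hpPW := pathFrom_toPW c hp
        have hfin := recML_path_le hy hpPW
        rw [hpPW.pathWeight_eq] at hpw
        rwa [hpw] at hfin
    · rw [hb.2.1 k j hkj hancE]; simp
  exact le_antisymm hxy hyx
end MaxLinearDAG
end

section
/- Let 𝒟 = (V,E) be a DAG with reachability matrix R and let B = (b_{ij})_{d×d} be a nonnegative matrix with sgn(B) = R (in particular b_{ii} > 0 for all i). Set A = diag(b_{11},…,b_{dd}) and A_0 = ((b_{ij}/b_{ii})·1_{pa(j)}(i))_{d×d}. Then the following are equivalent: (i) there exist positive weights c_{ki} > 0 for (k,i) ∈ E and c_{ii} > 0 for i ∈ V such that for every z ∈ [0,∞)^d and every i ∈ V, max_{j∈V} b_{ji} z_j = max( max_{k ∈ pa(i)} c_{ki} · max_{j∈V} b_{jk} z_j , c_{ii} z_i ); (ii) the fixed point equation B = A ∨ (B ⊙ A_0) holds (∨ is entrywise maximum). In that case (i) holds with the weights c_{ki} = b_{ki}/b_{kk} and c_{ii} = b_{ii}. -/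
open scoped NNReal ENNReal Classical

namespace MaxLinearDAG

variable {d : ℕ}

section Aux

variable {E : Fin d → Fin d → Prop}

lemma pathFrom_edge {k i : Fin d} (h : E k i) : PathFrom E k i [k, i] :=
  ⟨by simp, by simp, by simp, by simp [List.Chain', List.isChain_cons_cons, h]⟩

lemma anc_of_edge {k i : Fin d} (h : E k i) : anc E k i := ⟨_, pathFrom_edge h⟩

lemma pathFrom_snoc {j k i : Fin d} {p : List (Fin d)} (hp : PathFrom E j k p) (h : E k i) :
    PathFrom E j i (p ++ [i]) := by
  obtain ⟨hlen, hhead, hlast, hchain⟩ := hp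
  cases p with
  | nil => simp at hlen
  | cons a t =>
    refine ⟨by simp, by simp_all, List.getLast?_concat, ?_⟩
    refine List.IsChain.append hchain (by simp) ?_
    intro x hx y hy
    simp at hy
    rw [hlast] at hx
    simp at hx
    simpa [hx, hy] using h

lemma transGen_of_pathFrom : ∀ (p : List (Fin d)) {j i : Fin d},
    PathFrom E j i p → Relation.TransGen E j i := by
  intro p
  induction p with
  | nil => intro j i h; simp [PathFrom] at h
  | cons a t ih =>
    intro j i h
    obtain ⟨hlen, hhead, hlast, hchain⟩ := h
    simp at hhead
    subst hhead
    cases t with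
    | nil => simp at hlen
    | cons b t' =>
      simp only [List.Chain', List.isChain_cons_cons] at hchain
      cases t' with
      | nil =>
        simp at hlast
        subst hlast
        exact Relation.TransGen.single hchain.1
      | cons c t'' =>
        rw [List.getLast?_cons_cons] at hlast
        exact Relation.TransGen.head hchain.1
          (ih ⟨by simp, by simp, hlast, hchain.2⟩)

lemma anc_iff_transGen {j i : Fin d} : anc E j i ↔ Relation.TransGen E j i := by
  constructor
  · rintro ⟨p, hp⟩; exact transGen_of_pathFrom p hp
  · intro h
    induction h with
    | single h => exact anc_of_edge h
    | tail _ h ih => obtain ⟨p, hp⟩ := ih; exact ⟨_, pathFrom_snoc hp h⟩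

lemma edge_ne (hE : Acyclic E) {k i : Fin d} (h : E k i) : k ≠ i := by
  rintro rfl; exact hE k ⟨_, pathFrom_edge h⟩

lemma not_anc_rev (hE : Acyclic E) {k i : Fin d} (h : E k i) : ¬ anc E i k := by
  intro ha
  exact hE i (anc_iff_transGen.2 ((anc_iff_transGen.1 ha).tail h))

lemma wf_transGen (hE : Acyclic E) : WellFounded (Relation.TransGen E) := by
  haveI : IsIrrefl (Fin d) (Relation.TransGen E) :=
    ⟨fun i h => hE i (anc_iff_transGen.2 h)⟩
  exact Finite.wellFounded_of_trans_of_irrefl _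

lemma sup_indicator (f : Fin d → ℝ≥0) (j : Fin d) :
    (Finset.univ.sup fun m => f m * if m = j then (1:ℝ≥0) else 0) = f j := by
  apply le_antisymm
  · refine Finset.sup_le fun m _ => ?_
    by_cases h : m = j <;> simp [h]
  · have := Finset.le_sup (f := fun m => f m * if m = j then (1:ℝ≥0) else 0)
      (Finset.mem_univ j)
    simpa using this

end Aux

/-- Let `𝒟` be a DAG with reachability matrix `R = sgn(B)` for a nonnegative
matrix `B`, and set `A = diag(b 1 1, …, b d d)`, `A0 = ((b i j / b i i) • 1_{pa(j)}(i))`.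
Then `B` is the ML coefficient matrix of a recursive ML model on `𝒟` (i.e. there are positive
weights `c'` such that `max_j b j i * z j` solves the recursive equations on `𝒟`) iff the
fixed point equation `B = A ∨ (B ⊙ A0)` holds; in that case the weights
`c' k i = b k i / b k k`, `c' i i = b i i` work. -/
theorem stmt7 {d : ℕ} (hd : 1 ≤ d) (E : Fin d → Fin d → Prop) (hE : Acyclic E)
    (b : Fin d → Fin d → ℝ≥0)
    (hsgn : ∀ j i, 0 < b j i ↔ (anc E j i ∨ j = i)) :
    let A : Fin d → Fin d → ℝ≥0 := fun j i => if j = i then b i i else 0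
    let A0 : Fin d → Fin d → ℝ≥0 := fun k i => if E k i then b k i / b k k else 0
    ((∃ c' : Fin d → Fin d → ℝ≥0, (∀ k i, E k i → 0 < c' k i) ∧ (∀ i, 0 < c' i i) ∧
        ∀ z : Fin d → ℝ≥0,
          IsRecML E c' z fun i => Finset.univ.sup fun j => b j i * z j) ↔
      ∀ j i, b j i = A j i ⊔ mprod b A0 j i) ∧
    ((∀ j i, b j i = A j i ⊔ mprod b A0 j i) →
      ∀ z : Fin d → ℝ≥0,
        IsRecML E (fun k i => if k = i then b i i else b k i / b k k) z
          fun i => Finset.univ.sup fun j => b j i * z j) := by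
  intro A A0
  have hbkk : ∀ k, (0:ℝ≥0) < b k k := fun k => (hsgn k k).2 (Or.inr rfl)
  have hbne : ∀ k, b k k ≠ 0 := fun k => (hbkk k).ne'
  have hzero : ∀ k i, E k i → b i k = 0 := by
    intro k i h
    by_contra hne
    rcases (hsgn i k).1 (pos_iff_ne_zero.2 hne) with ha | he
    · exact not_anc_rev hE h ha
    · exact edge_ne hE h he.symm
  have huniv : (Finset.univ : Finset (Fin d)).Nonempty := by
    haveI : Nonempty (Fin d) := Fin.pos_iff_nonempty.1 hd
    exact Finset.univ_nonempty
  -- Part A: fixed point → the canonical weights solve the recursive equations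
  have partA : (∀ j i, b j i = A j i ⊔ mprod b A0 j i) →
      ∀ z : Fin d → ℝ≥0,
        IsRecML E (fun k i => if k = i then b i i else b k i / b k k) z
          fun i => Finset.univ.sup fun j => b j i * z j := by
    intro hFP z i
    have hM : ∀ j k, E k i → b j k * (b k i / b k k) ≤ b j i := by
      intro j k hk
      rw [hFP j i]
      refine le_sup_of_le_right ?_
      simp only [mprod, A0]
      have := Finset.le_sup (f := fun k => b j k * if E k i then b k i / b k k else 0)
        (Finset.mem_univ k)
      simpa [hk] using this
    simp only
    apply le_antisymm
    · refine Finset.sup_le fun j _ => ?_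
      rw [hFP j i, (max_mul_mul_right _ _ _).symm]
      refine sup_le ?_ ?_
      · by_cases hji : j = i
        · subst hji
          exact le_sup_of_le_right (by simp [A])
        · simp [A, hji]
      · refine le_sup_of_le_left ?_
        simp only [mprod, NNReal.finset_sup_mul]
        refine Finset.sup_le fun k _ => ?_
        by_cases hk : E k i
        · have hki : k ≠ i := edge_ne hE hk
          have h1 : b j k * A0 k i * z j ≤
              (b k i / b k k) * Finset.univ.sup fun m => b m k * z m := by
            rw [NNReal.mul_finset_sup]
            calc b j k * A0 k i * z j = (b k i / b k k) * (b j k * z j) := by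
                  simp [A0, hk]; ring
              _ ≤ Finset.univ.sup fun m => (b k i / b k k) * (b m k * z m) :=
                  Finset.le_sup (f := fun m => (b k i / b k k) * (b m k * z m))
                    (Finset.mem_univ j)
          refine h1.trans ?_
          have := Finset.le_sup (f := fun k => if E k i then
              (if k = i then b i i else b k i / b k k) *
                Finset.univ.sup fun m => b m k * z m else 0) (Finset.mem_univ k)
          simpa [hk, hki] using this
        · simp [A0, hk]
    · refine sup_le ?_ ?_
      · refine Finset.sup_le fun k _ => ?_
        by_cases hk : E k i
        · have hki : k ≠ i := edge_ne hE hk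
          rw [if_pos hk, if_neg hki, NNReal.mul_finset_sup]
          refine Finset.sup_le fun j _ => ?_
          calc b k i / b k k * (b j k * z j) = b j k * (b k i / b k k) * z j := by ring
            _ ≤ b j i * z j := mul_le_mul_left (hM j k hk) _
            _ ≤ _ := Finset.le_sup (f := fun j => b j i * z j) (Finset.mem_univ j)
        · simp [hk]
      · exact Finset.le_sup (f := fun j => b j i * z j) (Finset.mem_univ i)
  -- Part B: some positive weights solve the recursive equations → fixed point
  have partB : (∃ c' : Fin d → Fin d → ℝ≥0, (∀ k i, E k i → 0 < c' k i) ∧ (∀ i, 0 < c' i i) ∧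
        ∀ z : Fin d → ℝ≥0,
          IsRecML E c' z fun i => Finset.univ.sup fun j => b j i * z j) →
      ∀ j i, b j i = A j i ⊔ mprod b A0 j i := by
    rintro ⟨c', -, -, hrec⟩
    have key : ∀ (i j : Fin d),
        (Finset.univ.sup fun m => b m i * if m = j then (1:ℝ≥0) else 0) = b j i :=
      fun i j => sup_indicator (fun m => b m i) j
    have star : ∀ j i, b j i =
        (Finset.univ.sup fun k => if E k i then c' k i * b j k else 0) ⊔
          c' i i * (if i = j then (1:ℝ≥0) else 0) := by
      intro j i
      have h := hrec (fun m => if m = j then (1:ℝ≥0) else 0) i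
      simp only [key] at h
      exact h
    have ciib : ∀ i, c' i i = b i i := by
      intro i
      have h := star i i
      have h0 : (Finset.univ.sup fun k => if E k i then c' k i * b i k else 0) = 0 := by
        refine le_antisymm (Finset.sup_le fun k _ => ?_) zero_le
        by_cases hk : E k i
        · simp [hk, hzero k i hk]
        · simp [hk]
      rw [h0] at h
      simpa using h.symm
    have hle : ∀ k i, E k i → c' k i * b k k ≤ b k i := by
      intro k i hk
      rw [star k i]
      refine le_sup_of_le_left ?_
      have := Finset.le_sup (f := fun m => if E m i then c' m i * b k m else 0)
        (Finset.mem_univ k)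
      simpa [hk] using this
    -- submultiplicativity, by well-founded induction along the DAG
    have hC : ∀ l j k, b j k * b k l ≤ b j l * b k k := by
      intro l
      refine (wf_transGen hE).induction
        (C := fun l => ∀ j k, b j k * b k l ≤ b j l * b k k) l ?_
      intro l IH j k
      by_cases hkl : k = l
      · subst hkl; rw [mul_comm]
      · by_cases hb : b k l = 0
        · simp [hb]
        · have h := star k l
          rw [if_neg (Ne.symm hkl), mul_zero] at h
          have h' : b k l = Finset.univ.sup fun m => if E m l then c' m l * b k m else 0 := by
            simpa using h
          obtain ⟨m, -, hm⟩ := Finset.exists_mem_eq_sup Finset.univ huniv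
            (fun m => if E m l then c' m l * b k m else 0)
          rw [hm] at h'
          by_cases hEml : E m l
          · rw [if_pos hEml] at h'
            have h2 : c' m l * b j m ≤ b j l := by
              rw [star j l]
              refine le_sup_of_le_left ?_
              have := Finset.le_sup (f := fun m' => if E m' l then c' m' l * b j m' else 0)
                (Finset.mem_univ m)
              simpa [hEml] using this
            calc b j k * b k l = c' m l * (b j k * b k m) := by rw [h']; ring
              _ ≤ c' m l * (b j m * b k k) :=
                  mul_le_mul_right (IH m (Relation.TransGen.single hEml) j k) _
              _ = (c' m l * b j m) * b k k := by ring
              _ ≤ b j l * b k k := mul_le_mul_left h2 _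
          · rw [if_neg hEml] at h'
            exact absurd h' hb
    intro j i
    apply le_antisymm
    · rw [star j i]
      refine sup_le ?_ ?_
      · refine le_sup_of_le_right ?_
        refine Finset.sup_le fun k _ => ?_
        by_cases hk : E k i
        · rw [if_pos hk]
          have hc : c' k i ≤ b k i / b k k :=
            (le_div_iff₀ (hbkk k)).2 (hle k i hk)
          calc c' k i * b j k ≤ (b k i / b k k) * b j k := mul_le_mul_left hc _
            _ = b j k * A0 k i := by simp [A0, hk]; ring
            _ ≤ _ := by
                simp only [mprod, A0]
                exact Finset.le_sup
                  (f := fun k => b j k * if E k i then b k i / b k k else 0)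
                  (Finset.mem_univ k)
        · simp [hk]
      · by_cases hij : i = j
        · subst hij
          refine le_sup_of_le_left ?_
          simp [A, ciib]
        · simp [hij]
    · refine sup_le ?_ ?_
      · by_cases hji : j = i
        · subst hji; simp [A]
        · simp [A, hji]
      · refine Finset.sup_le fun k _ => ?_
        by_cases hk : E k i
        · have h1 : b j k * A0 k i = (b j k * b k i) / b k k := by
            simp [A0, hk]; rw [mul_div_assoc]
          rw [h1, div_le_iff₀ (hbkk k)]
          exact hC i j k
        · simp [A0, hk]
  refine ⟨⟨partB, fun hFP => ?_⟩, partA⟩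
  refine ⟨fun k i => if k = i then b i i else b k i / b k k, ?_, ?_, partA hFP⟩
  · intro k i hk
    simp only [if_neg (edge_ne hE hk)]
    exact pos_iff_ne_zero.2 (div_ne_zero
      (pos_iff_ne_zero.1 ((hsgn k i).2 (Or.inl (anc_of_edge hk)))) (hbne k))
  · intro i
    simp [hbkk i]
end MaxLinearDAG
end
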